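/- A tuple of precoders w = (w_{ip}) is feasible for Problem (P) if and only if there exist nonnegative bounds (τ, ε) such that (w, τ, ε) is feasible for Problem (R); in particular, for every feasible point (w, τ, ε) of Problem (R) the precoder tuple w is itself feasible for Problem (P). Consequently, the infimum of the total transmit power Σ_{p∈𝒯} Σ_{i∈𝒰_p} ‖w_{ip}‖² over the feasible set of Problem (P) equals the infimum of the same objective over the feasible set of Problem (R). -/
import Mathlib


open scoped ComplexInnerProductSpace

/-- Equivalence of Problem (P) and its relaxation (R):
a precoder tuple `w` is feasible for (P) iff there are nonnegative bounds `(τ, ε)`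
making `(w, τ, ε)` feasible for (R); in particular feasibility of `(w, τ, ε)` for (R)
implies feasibility of `w` for (P).  Consequently the infimum of the total transmit
power over the feasible set of (P) equals that over the feasible set of (R). -/
theorem stmt0
    {T U : Type*} [Fintype T] [Fintype U] [DecidableEq T] [DecidableEq U]
    (Up : T → Finset U)
    (hserve : ∀ i : U, ∃ p : T, i ∈ Up p)
    (N : ℕ) (hN : 1 ≤ N)
    (h : U → T → EuclideanSpace ℂ (Fin N))
    (γ : U → T → ℝ) (hγ : ∀ p : T, ∀ i ∈ Up p, 0 < γ i p)
    (σ2 : ℝ) (hσ : 0 < σ2)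
    -- `Ti i` is the (nonempty) set of BSs serving user `i`
    (Ti : U → Finset T) (hTi : ∀ i p, p ∈ Ti i ↔ i ∈ Up p)
    -- the per-BS SINR `Γ_{ip}(w)`
    (Γ : U → T → (T → U → EuclideanSpace ℂ (Fin N)) → ℝ)
    (hΓ : ∀ i p w, Γ i p w =
      ‖⟪h i p, w p i⟫‖ ^ 2 /
        (∑ q ∈ Ti i, ∑ j ∈ (Up q).erase i, ‖⟪h i q, w q j⟫‖ ^ 2
          + ∑ q ∈ (Ti i)ᶜ, ∑ j ∈ Up q, ‖⟪h i q, w q j⟫‖ ^ 2 + σ2))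
    -- feasibility for Problem (P)
    (FeasP : (T → U → EuclideanSpace ℂ (Fin N)) → Prop)
    (hFeasP : ∀ w, FeasP w ↔ ∀ p : T, ∀ i ∈ Up p, γ i p ≤ Γ i p w)
    -- feasibility for Problem (R)
    (FeasR : (T → U → EuclideanSpace ℂ (Fin N)) → (U → T → ℝ) → (U → T → ℝ) → Prop)
    (hFeasR : ∀ w τ ε, FeasR w τ ε ↔
      ((∀ q : T, ∀ i ∈ Up q, 0 ≤ τ i q) ∧
       (∀ q : T, ∀ i ∉ Up q, 0 ≤ ε i q) ∧
       -- (R1)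
       (∀ p : T, ∀ i ∈ Up p,
          γ i p * (∑ j ∈ (Up p).erase i, ‖⟪h i p, w p j⟫‖ ^ 2
              + ∑ q ∈ (Ti i).erase p, τ i q
              + ∑ q ∈ (Ti i)ᶜ, ε i q + σ2)
            ≤ ‖⟪h i p, w p i⟫‖ ^ 2) ∧
       -- (R2)
       (∀ q : T, ∀ i ∈ Up q,
          ∑ j ∈ (Up q).erase i, ‖⟪h i q, w q j⟫‖ ^ 2 ≤ τ i q) ∧
       -- (R3)
       (∀ q : T, ∀ i ∉ Up q,
          ∑ j ∈ Up q, ‖⟪h i q, w q j⟫‖ ^ 2 ≤ ε i q)))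
    -- the total transmit power
    (obj : (T → U → EuclideanSpace ℂ (Fin N)) → ℝ)
    (hobj : ∀ w, obj w = ∑ p : T, ∑ i ∈ Up p, ‖w p i‖ ^ 2) :
    (∀ w, (FeasP w ↔ ∃ τ ε, FeasR w τ ε) ∧ ∀ τ ε, FeasR w τ ε → FeasP w) ∧
    sInf {x : ℝ | ∃ w, FeasP w ∧ obj w = x}
      = sInf {x : ℝ | ∃ w τ ε, FeasR w τ ε ∧ obj w = x} := by

  -- positivity of the denominator
  have hden : ∀ (i : U) (p : T) (w : T → U → EuclideanSpace ℂ (Fin N)),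
      0 < ∑ q ∈ Ti i, ∑ j ∈ (Up q).erase i, ‖⟪h i q, w q j⟫‖ ^ 2
          + ∑ q ∈ (Ti i)ᶜ, ∑ j ∈ Up q, ‖⟪h i q, w q j⟫‖ ^ 2 + σ2 := by
    intro i p w
    have h1 : (0:ℝ) ≤ ∑ q ∈ Ti i, ∑ j ∈ (Up q).erase i, ‖⟪h i q, w q j⟫‖ ^ 2 :=
      Finset.sum_nonneg fun q _ => Finset.sum_nonneg fun j _ => by positivity
    have h2 : (0:ℝ) ≤ ∑ q ∈ (Ti i)ᶜ, ∑ j ∈ Up q, ‖⟪h i q, w q j⟫‖ ^ 2 :=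
      Finset.sum_nonneg fun q _ => Finset.sum_nonneg fun j _ => by positivity
    linarith
  have key : ∀ w, (FeasP w ↔ ∃ τ ε, FeasR w τ ε) ∧ ∀ τ ε, FeasR w τ ε → FeasP w := by
    intro w
    have back : ∀ τ ε, FeasR w τ ε → FeasP w := by
      intro τ ε hR
      rw [hFeasR] at hR
      obtain ⟨hτ, hε, hR1, hR2, hR3⟩ := hR
      rw [hFeasP]
      intro p i hip
      rw [hΓ]
      rw [le_div_iff₀ (hden i p w)]
      have hpTi : p ∈ Ti i := (hTi i p).mpr hip
      have hsplit : ∑ q ∈ Ti i, ∑ j ∈ (Up q).erase i, ‖⟪h i q, w q j⟫‖ ^ 2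
          = (∑ j ∈ (Up p).erase i, ‖⟪h i p, w p j⟫‖ ^ 2)
            + ∑ q ∈ (Ti i).erase p, ∑ j ∈ (Up q).erase i, ‖⟪h i q, w q j⟫‖ ^ 2 :=
        (Finset.add_sum_erase _ _ hpTi).symm
      have h2 : ∑ q ∈ (Ti i).erase p, ∑ j ∈ (Up q).erase i, ‖⟪h i q, w q j⟫‖ ^ 2
          ≤ ∑ q ∈ (Ti i).erase p, τ i q := by
        refine Finset.sum_le_sum fun q hq => ?_
        exact hR2 q i ((hTi i q).mp (Finset.mem_of_mem_erase hq))
      have h3 : ∑ q ∈ (Ti i)ᶜ, ∑ j ∈ Up q, ‖⟪h i q, w q j⟫‖ ^ 2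
          ≤ ∑ q ∈ (Ti i)ᶜ, ε i q := by
        refine Finset.sum_le_sum fun q hq => ?_
        exact hR3 q i (fun hmem => (Finset.mem_compl.mp hq) ((hTi i q).mpr hmem))
      have hγpos := hγ p i hip
      have hchain : γ i p *
          (∑ q ∈ Ti i, ∑ j ∈ (Up q).erase i, ‖⟪h i q, w q j⟫‖ ^ 2
            + ∑ q ∈ (Ti i)ᶜ, ∑ j ∈ Up q, ‖⟪h i q, w q j⟫‖ ^ 2 + σ2)
          ≤ γ i p * (∑ j ∈ (Up p).erase i, ‖⟪h i p, w p j⟫‖ ^ 2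
              + ∑ q ∈ (Ti i).erase p, τ i q
              + ∑ q ∈ (Ti i)ᶜ, ε i q + σ2) := by
        apply mul_le_mul_of_nonneg_left _ hγpos.le
        rw [hsplit]; linarith
      exact hchain.trans (hR1 p i hip)
    refine ⟨⟨fun hP => ?_, fun ⟨τ, ε, hR⟩ => back τ ε hR⟩, back⟩
    refine ⟨fun i q => ∑ j ∈ (Up q).erase i, ‖⟪h i q, w q j⟫‖ ^ 2,
      fun i q => ∑ j ∈ Up q, ‖⟪h i q, w q j⟫‖ ^ 2, ?_⟩
    rw [hFeasR]
    refine ⟨fun q i _ => Finset.sum_nonneg fun j _ => by positivity,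
      fun q i _ => Finset.sum_nonneg fun j _ => by positivity, ?_,
      fun q i _ => le_rfl, fun q i _ => le_rfl⟩
    intro p i hip
    rw [hFeasP] at hP
    have hΓle := hP p i hip
    rw [hΓ, le_div_iff₀ (hden i p w)] at hΓle
    have hpTi : p ∈ Ti i := (hTi i p).mpr hip
    have hsplit : ∑ q ∈ Ti i, ∑ j ∈ (Up q).erase i, ‖⟪h i q, w q j⟫‖ ^ 2
        = (∑ j ∈ (Up p).erase i, ‖⟪h i p, w p j⟫‖ ^ 2)
          + ∑ q ∈ (Ti i).erase p, ∑ j ∈ (Up q).erase i, ‖⟪h i q, w q j⟫‖ ^ 2 :=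
      (Finset.add_sum_erase _ _ hpTi).symm
    calc γ i p * (∑ j ∈ (Up p).erase i, ‖⟪h i p, w p j⟫‖ ^ 2
          + ∑ q ∈ (Ti i).erase p, ∑ j ∈ (Up q).erase i, ‖⟪h i q, w q j⟫‖ ^ 2
          + ∑ q ∈ (Ti i)ᶜ, ∑ j ∈ Up q, ‖⟪h i q, w q j⟫‖ ^ 2 + σ2)
        = γ i p * (∑ q ∈ Ti i, ∑ j ∈ (Up q).erase i, ‖⟪h i q, w q j⟫‖ ^ 2
          + ∑ q ∈ (Ti i)ᶜ, ∑ j ∈ Up q, ‖⟪h i q, w q j⟫‖ ^ 2 + σ2) := by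
          rw [hsplit]
      _ ≤ ‖⟪h i p, w p i⟫‖ ^ 2 := hΓle
  refine ⟨key, ?_⟩
  congr 1
  ext x
  simp only [Set.mem_setOf_eq]
  constructor
  · rintro ⟨w, hP, hx⟩
    obtain ⟨τ, ε, hR⟩ := (key w).1.mp hP
    exact ⟨w, τ, ε, hR, hx⟩
  · rintro ⟨w, τ, ε, hR, hx⟩
    exact ⟨w, (key w).2 τ ε hR, hx⟩
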